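/- Let g = 2r with r ≥ 2. The presented group with generators a_1, b_1, …, a_g, b_g and relators c_g, c_r, and, for each 1 ≤ k ≤ r, the words a_k a_{g+1−k}, b_k a_{g+1−k} b_{g+1−k} a_{g+1−k}^{-1}, a_{g+1−k} a_k, and b_{g+1−k} a_{g+1−k}^{-1} b_k a_{g+1−k}, is isomorphic to the genus-r surface group π_r. -/

import Mathlib

namespace Paper

/-- The free group `F_g` on the `2g` generators `a_1, b_1, …, a_g, b_g`
(the pair `(i, false)` is `a_{i+1}`, the pair `(i, true)` is `b_{i+1}`). -/
abbrev F (g : ℕ) := FreeGroup (Fin g × Bool)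

/-- The generator `a_i` of `F_g`, for `1 ≤ i ≤ g`; by convention `a_i = 1` for out-of-range
indices (in particular `a_{g+1} = 1`). -/
def a (g i : ℕ) : F g :=
  if h : 1 ≤ i ∧ i ≤ g then FreeGroup.of (⟨i - 1, by omega⟩, false) else 1

/-- The generator `b_i` of `F_g`, for `1 ≤ i ≤ g`. -/
def b (g i : ℕ) : F g :=
  if h : 1 ≤ i ∧ i ≤ g then FreeGroup.of (⟨i - 1, by omega⟩, true) else 1

/-- The word `c_i = b_i⁻¹ ⋯ b_2⁻¹ b_1⁻¹ (a_1 b_1 a_1⁻¹)(a_2 b_2 a_2⁻¹) ⋯ (a_i b_i a_i⁻¹)`,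
with `c_0 = 1`. -/
def c (g i : ℕ) : F g :=
  (((List.range i).reverse.map fun j => (b g (j + 1))⁻¹).prod) *
    (((List.range i).map fun j => a g (j + 1) * b g (j + 1) * (a g (j + 1))⁻¹).prod)

/-- The product `b_i b_{i+1} ⋯ b_j`. -/
def prodb (g i j : ℕ) : F g := ((List.range (j + 1 - i)).map fun l => b g (i + l)).prod

/-- `B^h_{0,1} = b_1 b_2 ⋯ b_h`. -/
def B01 (g h : ℕ) : F g := prodb g 1 h

/-- `B^h_{0,2} = b_1 b_2 ⋯ b_h · c_h a_{h+1}`. -/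
def B02 (g h : ℕ) : F g := prodb g 1 h * c g h * a g (h + 1)

/-- `B^h_{0,s}` for `s = 1, 2`. -/
def B0 (g s h : ℕ) : F g := if s = 1 then B01 g h else B02 g h

/-- `B^h_{2k-1} = a_k · b_k b_{k+1} ⋯ b_{h+1-k} · c_{h+1-k} a_{h+1-k}`. -/
def Bodd (g h k : ℕ) : F g :=
  a g k * prodb g k (h + 1 - k) * c g (h + 1 - k) * a g (h + 1 - k)

/-- `B^h_{2k} = a_k · b_{k+1} b_{k+2} ⋯ b_{h-k} · c_{h-k} a_{h+1-k}`. -/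
def Beven (g h k : ℕ) : F g :=
  a g k * prodb g (k + 1) (h - k) * c g (h - k) * a g (h + 1 - k)

/-- The set of words `ℬ^h_s`: it consists of `B^h_{0,s}, B^h_1, …, B^h_h` (the odd-indexed
`B^h_{2k-1}` for `2k - 1 ≤ h` and the even-indexed `B^h_{2k}` for `2k ≤ h`), together with
`a_{r+1}` and `c_r a_{r+1}` when `h = 2r + 1` is odd. -/
def Bset (g s h : ℕ) : Set (F g) :=
  {B0 g s h}
    ∪ {w | ∃ k, 1 ≤ k ∧ 2 * k - 1 ≤ h ∧ w = Bodd g h k}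
    ∪ {w | ∃ k, 1 ≤ k ∧ 2 * k ≤ h ∧ w = Beven g h k}
    ∪ (if h % 2 = 1 then {a g (h / 2 + 1), c g (h / 2) * a g (h / 2 + 1)} else (∅ : Set (F g)))

/-- The genus-`g` surface group `π_g`, presented with generators `a_1, b_1, …, a_g, b_g`
and the single relator `c_g`. -/
abbrev pi (g : ℕ) := PresentedGroup ({c g g} : Set (F g))

/-- The natural projection `F_g → π_g`. -/
abbrev toPi (g : ℕ) : F g →* pi g := PresentedGroup.mk _

/-- The quotient of `π_g` by the normal closure of the images of a set `S` of words. -/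
abbrev quotBy (g : ℕ) (S : Set (F g)) :=
  pi g ⧸ Subgroup.normalClosure (toPi g '' S)

/-- The projection `π_g → π_g / N(S)`. -/
abbrev projBy (g : ℕ) (S : Set (F g)) : pi g →* quotBy g S :=
  QuotientGroup.mk' _

/-- The relators of Statement 7: `c_g`, `c_r`, and for each `1 ≤ k ≤ r` the words
`a_k a_{g+1-k}`, `b_k a_{g+1-k} b_{g+1-k} a_{g+1-k}⁻¹`, `a_{g+1-k} a_k` and
`b_{g+1-k} a_{g+1-k}⁻¹ b_k a_{g+1-k}`. -/
def rels7 (g r : ℕ) : Set (F g) :=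
  {c g g, c g r}
    ∪ {w | ∃ k, 1 ≤ k ∧ k ≤ r ∧
        (w = a g k * a g (g + 1 - k) ∨
          w = b g k * a g (g + 1 - k) * b g (g + 1 - k) * (a g (g + 1 - k))⁻¹ ∨
          w = a g (g + 1 - k) * a g k ∨
          w = b g (g + 1 - k) * (a g (g + 1 - k))⁻¹ * b g k * a g (g + 1 - k))}

/-! ### Auxiliary machinery for Statement 7 -/

section Aux

variable {G H K : Type*} [Group G] [Group H] [Group K]

lemma prod_transfer (L : G →* K) (M : H →* K) (l : List ℕ) (f : ℕ → G) (f' : ℕ → H)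
    (h : ∀ x ∈ l, L (f x) = M (f' x)) :
    L ((l.map f).prod) = M ((l.map f').prod) := by
  rw [map_list_prod, map_list_prod, List.map_map, List.map_map]
  exact congrArg List.prod (List.map_congr_left h)

lemma prod_reverse_range (f : ℕ → G) (n : ℕ) :
    ((List.range n).reverse.map f).prod
      = ((List.range n).map fun j => f (n - 1 - j)).prod := by
  induction n with
  | zero => simp
  | succ n ih =>
    calc ((List.range (n + 1)).reverse.map f).prod
        = f n * ((List.range n).reverse.map f).prod := by
          rw [List.range_succ, List.reverse_append]
          simp
      _ = f n * ((List.range n).map fun j => f (n - 1 - j)).prod := by rw [ih]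
      _ = ((List.range (n + 1)).map fun j => f (n + 1 - 1 - j)).prod := by
          rw [List.range_succ_eq_map]
          simp only [List.map_cons, List.prod_cons, List.map_map, Nat.add_sub_cancel,
            Nat.sub_zero]
          congr 1
          refine congrArg (fun l : List G => l.prod) (List.map_congr_left ?_)
          intro x hx
          simp only [Function.comp_apply, Nat.succ_eq_add_one]
          congr 1
          omega

end Aux

/-- `mk` kills every relator. -/
lemma mk_rel_eq_one {g : ℕ} {S : Set (F g)} {w : F g} (hw : w ∈ S) :
    PresentedGroup.mk S w = 1 :=
  (QuotientGroup.eq_one_iff w).mpr (Subgroup.subset_normalClosure hw)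

/-- The map on generators defining the homomorphism `F_g → π_r`. -/
def fgen (r g : ℕ) : Fin g × Bool → pi r := fun x =>
  if (x.1 : ℕ) < r then
    if x.2 then toPi r (b r (x.1 + 1)) else toPi r (a r (x.1 + 1))
  else
    if x.2 then toPi r (a r (g - x.1) * (b r (g - x.1))⁻¹ * (a r (g - x.1))⁻¹)
    else (toPi r (a r (g - x.1)))⁻¹

/-- The induced homomorphism `F_g →* π_r`. -/
abbrev Lmap (r g : ℕ) : F g →* pi r := FreeGroup.lift (fgen r g)

lemma Lmap_a_low {r g i : ℕ} (h1 : 1 ≤ i) (h2 : i ≤ r) (h3 : i ≤ g) :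
    Lmap r g (a g i) = toPi r (a r i) := by
  rw [a, dif_pos ⟨h1, h3⟩, FreeGroup.lift_apply_of]
  have hv : ((⟨i - 1, by omega⟩ : Fin g) : ℕ) = i - 1 := rfl
  have hi : i - 1 + 1 = i := by omega
  simp only [fgen, hv, if_pos (show i - 1 < r by omega), Bool.false_eq_true, if_false, hi]

lemma Lmap_b_low {r g i : ℕ} (h1 : 1 ≤ i) (h2 : i ≤ r) (h3 : i ≤ g) :
    Lmap r g (b g i) = toPi r (b r i) := by
  rw [b, dif_pos ⟨h1, h3⟩, FreeGroup.lift_apply_of]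
  have hv : ((⟨i - 1, by omega⟩ : Fin g) : ℕ) = i - 1 := rfl
  have hi : i - 1 + 1 = i := by omega
  simp only [fgen, hv, if_pos (show i - 1 < r by omega), if_true, hi]

lemma Lmap_a_high {r g i : ℕ} (h1 : r < i) (h2 : i ≤ g) (h0 : 1 ≤ i) :
    Lmap r g (a g i) = (toPi r (a r (g + 1 - i)))⁻¹ := by
  rw [a, dif_pos ⟨h0, h2⟩, FreeGroup.lift_apply_of]
  have hv : ((⟨i - 1, by omega⟩ : Fin g) : ℕ) = i - 1 := rfl
  have hi : g - (i - 1) = g + 1 - i := by omega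
  simp only [fgen, hv, if_neg (show ¬ (i - 1 < r) by omega), Bool.false_eq_true, if_false, hi]

lemma Lmap_b_high {r g i : ℕ} (h1 : r < i) (h2 : i ≤ g) (h0 : 1 ≤ i) :
    Lmap r g (b g i)
      = toPi r (a r (g + 1 - i) * (b r (g + 1 - i))⁻¹ * (a r (g + 1 - i))⁻¹) := by
  rw [b, dif_pos ⟨h0, h2⟩, FreeGroup.lift_apply_of]
  have hv : ((⟨i - 1, by omega⟩ : Fin g) : ℕ) = i - 1 := rfl
  have hi : g - (i - 1) = g + 1 - i := by omega
  simp only [fgen, hv, if_neg (show ¬ (i - 1 < r) by omega), if_true, hi]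

/-- `L` maps `c_m` (for `m ≤ r ≤ g`) to the image of `c_m`. -/
lemma Lmap_c_low {r g m : ℕ} (hm : m ≤ r) (hrg : r ≤ g) :
    Lmap r g (c g m) = toPi r (c r m) := by
  simp only [c]
  rw [map_mul, map_mul]
  congr 1
  · refine prod_transfer _ _ _ _ _ ?_
    intro x hx
    have hxr : x < m := by simpa using (List.mem_reverse.mp hx)
    rw [map_inv, map_inv, Lmap_b_low (by omega) (by omega) (by omega)]
  · refine prod_transfer _ _ _ _ _ ?_
    intro x hx
    have hxr : x < m := by simpa using hx
    simp only [map_mul, map_inv]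
    rw [Lmap_a_low (by omega) (by omega) (by omega),
      Lmap_b_low (by omega) (by omega) (by omega)]

/-- The positive half `P = (a_1 b_1 a_1⁻¹) ⋯ (a_m b_m a_m⁻¹)`. -/
def Pw (r m : ℕ) : F r :=
  ((List.range m).map fun j => a r (j + 1) * b r (j + 1) * (a r (j + 1))⁻¹).prod

/-- The negative half `Q = b_m⁻¹ ⋯ b_1⁻¹`. -/
def Qw (r m : ℕ) : F r :=
  ((List.range m).reverse.map fun j => (b r (j + 1))⁻¹).prod

lemma c_eq_QP (r m : ℕ) : c r m = Qw r m * Pw r m := rfl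

lemma Qw_alt (r : ℕ) :
    Qw r r = ((List.range r).map fun x => (b r (r - x))⁻¹).prod := by
  rw [Qw, prod_reverse_range]
  congr 1
  apply List.map_congr_left
  intro x hx
  have hxr : x < r := by simpa using hx
  congr 2
  omega

lemma Lmap_cgg {r g : ℕ} (hr : 1 ≤ r) (hg : g = 2 * r) :
    Lmap r g (c g g) = 1 := by
  have hPQ1 : toPi r (Qw r r) * toPi r (Pw r r) = 1 := by
    rw [← map_mul, ← c_eq_QP]
    exact mk_rel_eq_one rfl
  have hA : Lmap r g (((List.range g).reverse.map fun j => (b g (j + 1))⁻¹).prod)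
      = toPi r (Pw r r) * toPi r (Qw r r) := by
    rw [show List.range g = List.range r ++ (List.range r).map (fun x => r + x) by
        rw [hg, two_mul]; exact List.range_add]
    rw [List.reverse_append, List.map_append, List.prod_append,
      map_mul, ← List.map_reverse, List.map_map]
    congr 1
    · rw [prod_reverse_range]
      refine prod_transfer _ (toPi r) _ _
        (fun j => a r (j + 1) * b r (j + 1) * (a r (j + 1))⁻¹) ?_
      intro x hx
      have hxr : x < r := by simpa using hx
      simp only [Function.comp_apply]
      rw [map_inv, Lmap_b_high (by omega) (by omega) (by omega)]
      rw [show g + 1 - (r + (r - 1 - x) + 1) = x + 1 by omega]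
      simp only [← map_inv]
      exact congrArg (toPi r) (by group)
    · refine prod_transfer _ (toPi r) _ _ (fun j => (b r (j + 1))⁻¹) ?_
      intro x hx
      have hxr : x < r := by simpa using (List.mem_reverse.mp hx)
      rw [map_inv, Lmap_b_low (by omega) (by omega) (by omega), map_inv]
  have hB : Lmap r g
      (((List.range g).map fun j => a g (j + 1) * b g (j + 1) * (a g (j + 1))⁻¹).prod)
      = toPi r (Pw r r) * toPi r (Qw r r) := by
    rw [show List.range g = List.range r ++ (List.range r).map (fun x => r + x) by
        rw [hg, two_mul]; exact List.range_add]
    rw [List.map_append, List.prod_append, map_mul, List.map_map]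
    congr 1
    · refine prod_transfer _ (toPi r) _ _
        (fun j => a r (j + 1) * b r (j + 1) * (a r (j + 1))⁻¹) ?_
      intro x hx
      have hxr : x < r := by simpa using hx
      simp only [map_mul, map_inv]
      rw [Lmap_a_low (by omega) (by omega) (by omega),
        Lmap_b_low (by omega) (by omega) (by omega)]
    · rw [Qw_alt]
      refine prod_transfer _ (toPi r) _ _ (fun x => (b r (r - x))⁻¹) ?_
      intro x hx
      have hxr : x < r := by simpa using hx
      simp only [Function.comp_apply]
      simp only [map_mul, map_inv]
      rw [Lmap_a_high (by omega) (by omega) (by omega),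
        Lmap_b_high (by omega) (by omega) (by omega)]
      rw [show g + 1 - (r + x + 1) = r - x by omega]
      simp only [← map_inv, ← map_mul]
      exact congrArg (toPi r) (by group)
  show Lmap r g (c g g) = 1
  simp only [c]
  rw [map_mul, hA, hB]
  have hP : toPi r (Pw r r) = (toPi r (Qw r r))⁻¹ :=
    eq_inv_of_mul_eq_one_right hPQ1
  rw [hP]
  group

/-- All relators of `rels7` die in `π_r`. -/
lemma fgen_kills {r g : ℕ} (hr : 1 ≤ r) (hg : g = 2 * r) :
    ∀ w ∈ rels7 g r, FreeGroup.lift (fgen r g) w = 1 := by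
  have hrg : r ≤ g := by omega
  rintro w (hw | ⟨k, hk1, hk2, (rfl | rfl | rfl | rfl)⟩)
  · rcases hw with rfl | rfl
    · exact Lmap_cgg hr hg
    · show Lmap r g (c g r) = 1
      rw [Lmap_c_low le_rfl hrg]
      exact mk_rel_eq_one rfl
  all_goals
    have hk3 : r < g + 1 - k := by omega
    have hk4 : g + 1 - k ≤ g := by omega
    have hk5 : 1 ≤ g + 1 - k := by omega
    have hk6 : g + 1 - (g + 1 - k) = k := by omega
  · show Lmap r g (a g k * a g (g + 1 - k)) = 1
    rw [map_mul, Lmap_a_low hk1 (by omega) (by omega), Lmap_a_high hk3 hk4 hk5, hk6]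
    group
  · show Lmap r g (b g k * a g (g + 1 - k) * b g (g + 1 - k) * (a g (g + 1 - k))⁻¹) = 1
    rw [map_mul, map_mul, map_mul, map_inv,
      Lmap_b_low hk1 (by omega) (by omega), Lmap_a_high hk3 hk4 hk5,
      Lmap_b_high hk3 hk4 hk5, hk6]
    simp only [map_mul, map_inv]
    group
  · show Lmap r g (a g (g + 1 - k) * a g k) = 1
    rw [map_mul, Lmap_a_low hk1 (by omega) (by omega), Lmap_a_high hk3 hk4 hk5, hk6]
    group
  · show Lmap r g (b g (g + 1 - k) * (a g (g + 1 - k))⁻¹ * b g k * a g (g + 1 - k)) = 1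
    rw [map_mul, map_mul, map_mul, map_inv,
      Lmap_b_low hk1 (by omega) (by omega), Lmap_a_high hk3 hk4 hk5,
      Lmap_b_high hk3 hk4 hk5, hk6]
    simp only [map_mul, map_inv]
    group

/-- The map on generators defining the homomorphism `F_r → PresentedGroup (rels7 g r)`. -/
def psigen (r g : ℕ) (hrg : r ≤ g) : Fin r × Bool → PresentedGroup (rels7 g r) :=
  fun x => PresentedGroup.mk _ (FreeGroup.of (⟨(x.1 : ℕ), lt_of_lt_of_le x.1.isLt hrg⟩, x.2))

lemma psigen_a {r g i : ℕ} (hrg : r ≤ g) (h1 : 1 ≤ i) (h2 : i ≤ r) :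
    FreeGroup.lift (psigen r g hrg) (a r i)
      = PresentedGroup.mk (rels7 g r) (a g i) := by
  rw [a, a, dif_pos ⟨h1, h2⟩, dif_pos ⟨h1, le_trans h2 hrg⟩, FreeGroup.lift_apply_of]
  rfl

lemma psigen_b {r g i : ℕ} (hrg : r ≤ g) (h1 : 1 ≤ i) (h2 : i ≤ r) :
    FreeGroup.lift (psigen r g hrg) (b r i)
      = PresentedGroup.mk (rels7 g r) (b g i) := by
  rw [b, b, dif_pos ⟨h1, h2⟩, dif_pos ⟨h1, le_trans h2 hrg⟩, FreeGroup.lift_apply_of]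
  rfl

lemma psigen_c {r g m : ℕ} (hrg : r ≤ g) (hm : m ≤ r) :
    FreeGroup.lift (psigen r g hrg) (c r m)
      = PresentedGroup.mk (rels7 g r) (c g m) := by
  simp only [c]
  rw [map_mul, map_mul]
  congr 1
  · refine prod_transfer _ _ _ _ _ ?_
    intro x hx
    have hxr : x < m := by simpa using (List.mem_reverse.mp hx)
    rw [map_inv, map_inv, psigen_b hrg (by omega) (by omega)]
  · refine prod_transfer _ _ _ _ _ ?_
    intro x hx
    have hxr : x < m := by simpa using hx
    simp only [map_mul, map_inv]
    rw [psigen_a hrg (by omega) (by omega), psigen_b hrg (by omega) (by omega)]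

lemma psigen_kills {r g : ℕ} (hrg : r ≤ g) :
    ∀ w ∈ ({c r r} : Set (F r)), FreeGroup.lift (psigen r g hrg) w = 1 := by
  rintro w rfl
  rw [psigen_c hrg le_rfl]
  exact mk_rel_eq_one (Set.mem_union_left _ (Set.mem_insert_iff.mpr (Or.inr rfl)))

lemma a_of (g : ℕ) (i : Fin g) : a g ((i : ℕ) + 1) = FreeGroup.of (i, false) := by
  rw [a, dif_pos ⟨by omega, by omega⟩]
  simp

lemma b_of (g : ℕ) (i : Fin g) : b g ((i : ℕ) + 1) = FreeGroup.of (i, true) := by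
  rw [b, dif_pos ⟨by omega, by omega⟩]
  simp

/-- For `g = 2r` with `r ≥ 2`, the group presented with generators
`a_1, b_1, …, a_g, b_g` and relators `c_g`, `c_r` and, for each `1 ≤ k ≤ r`, the words
`a_k a_{g+1-k}`, `b_k a_{g+1-k} b_{g+1-k} a_{g+1-k}⁻¹`, `a_{g+1-k} a_k` and
`b_{g+1-k} a_{g+1-k}⁻¹ b_k a_{g+1-k}`, is isomorphic to the genus-`r` surface group `π_r`. -/

theorem presentation_iso_genus_r (r g : ℕ) (hr : 2 ≤ r) (hg : g = 2 * r) :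
    Nonempty (PresentedGroup (rels7 g r) ≃* pi r) := by
  have hr1 : 1 ≤ r := by omega
  have hrg : r ≤ g := by omega
  set Φ : PresentedGroup (rels7 g r) →* pi r := PresentedGroup.toGroup (fgen_kills hr1 hg)
    with hΦdef
  set Ψ : pi r →* PresentedGroup (rels7 g r) := PresentedGroup.toGroup (psigen_kills hrg)
    with hΨdef
  have hrel1 : ∀ k, 1 ≤ k → k ≤ r →
      PresentedGroup.mk (rels7 g r) (a g (g + 1 - k))
        = (PresentedGroup.mk (rels7 g r) (a g k))⁻¹ := by
    intro k h1 h2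
    have h := mk_rel_eq_one (S := rels7 g r)
      (Set.mem_union_right _ ⟨k, h1, h2, Or.inl rfl⟩)
    rw [map_mul] at h
    exact eq_inv_of_mul_eq_one_right h
  have hΨ : ∀ w : F r, Ψ (toPi r w) = FreeGroup.lift (psigen r g hrg) w := by
    intro w
    have h : Ψ.comp (toPi r) = FreeGroup.lift (psigen r g hrg) :=
      FreeGroup.ext_hom _ _ fun y => by
        rw [MonoidHom.comp_apply, FreeGroup.lift_apply_of]
        exact PresentedGroup.toGroup.of _
    exact DFunLike.congr_fun h w
  refine ⟨MonoidHom.toMulEquiv Φ Ψ ?_ ?_⟩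
  · -- Ψ ∘ Φ = id
    apply PresentedGroup.ext
    rintro ⟨i, s⟩
    rw [MonoidHom.comp_apply, MonoidHom.id_apply,
      show Φ (PresentedGroup.of (i, s)) = fgen r g (i, s) from PresentedGroup.toGroup.of _]
    by_cases hi : (i : ℕ) < r
    · cases s
      · rw [show fgen r g (i, false) = toPi r (a r ((i : ℕ) + 1)) by simp [fgen, hi],
          hΨ, psigen_a hrg (by omega) (by omega), a_of g i]
        rfl
      · rw [show fgen r g (i, true) = toPi r (b r ((i : ℕ) + 1)) by simp [fgen, hi],
          hΨ, psigen_b hrg (by omega) (by omega), b_of g i]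
        rfl
    · have hig : (i : ℕ) < g := i.isLt
      have hk1 : 1 ≤ g - (i : ℕ) := by omega
      have hk2 : g - (i : ℕ) ≤ r := by omega
      have hidx : g + 1 - (g - (i : ℕ)) = (i : ℕ) + 1 := by omega
      cases s
      · rw [show fgen r g (i, false) = (toPi r (a r (g - (i : ℕ))))⁻¹ by simp [fgen, hi],
          ← map_inv, hΨ, map_inv, psigen_a hrg hk1 hk2, ← hrel1 _ hk1 hk2, hidx, a_of g i]
        rfl
      · rw [show fgen r g (i, true)
            = toPi r (a r (g - (i : ℕ)) * (b r (g - (i : ℕ)))⁻¹ * (a r (g - (i : ℕ)))⁻¹)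
            by simp [fgen, hi],
          hΨ]
        simp only [map_mul, map_inv]
        rw [psigen_a hrg hk1 hk2, psigen_b hrg hk1 hk2]
        have h4 := mk_rel_eq_one (S := rels7 g r)
          (Set.mem_union_right _ ⟨g - (i : ℕ), hk1, hk2, Or.inr (Or.inr (Or.inr rfl))⟩)
        rw [map_mul, map_mul, map_mul, map_inv, hrel1 _ hk1 hk2, inv_inv] at h4
        set A := PresentedGroup.mk (rels7 g r) (a g (g - (i : ℕ)))
        set B := PresentedGroup.mk (rels7 g r) (b g (g - (i : ℕ)))
        set B' := PresentedGroup.mk (rels7 g r) (b g (g + 1 - (g - (i : ℕ))))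
        have hB' : B' = A * B⁻¹ * A⁻¹ := by
          calc B' = (B' * A * B * A⁻¹) * (A * B⁻¹ * A⁻¹) := by group
          _ = A * B⁻¹ * A⁻¹ := by rw [h4, one_mul]
        rw [show (PresentedGroup.of (i, true) : PresentedGroup (rels7 g r))
            = PresentedGroup.mk (rels7 g r) (b g ((i : ℕ) + 1)) by rw [b_of g i]; rfl,
          ← hidx]
        exact hB'.symm
  · -- Φ ∘ Ψ = id
    apply PresentedGroup.ext
    rintro ⟨i, s⟩
    rw [MonoidHom.comp_apply, MonoidHom.id_apply,
      show Ψ (PresentedGroup.of (i, s)) = psigen r g hrg (i, s) from PresentedGroup.toGroup.of _]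
    rw [show psigen r g hrg (i, s)
        = PresentedGroup.of ((⟨(i : ℕ), lt_of_lt_of_le i.isLt hrg⟩ : Fin g), s) from rfl,
      show Φ (PresentedGroup.of ((⟨(i : ℕ), lt_of_lt_of_le i.isLt hrg⟩ : Fin g), s))
        = fgen r g ((⟨(i : ℕ), lt_of_lt_of_le i.isLt hrg⟩ : Fin g), s)
        from PresentedGroup.toGroup.of _]
    have hi : (i : ℕ) < r := i.isLt
    cases s
    · rw [show fgen r g ((⟨(i : ℕ), lt_of_lt_of_le i.isLt hrg⟩ : Fin g), false)
          = toPi r (a r ((i : ℕ) + 1)) by simp [fgen, hi], a_of r i]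
      rfl
    · rw [show fgen r g ((⟨(i : ℕ), lt_of_lt_of_le i.isLt hrg⟩ : Fin g), true)
          = toPi r (b r ((i : ℕ) + 1)) by simp [fgen, hi], b_of r i]
      rfl

end Paper
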